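/- Let Ĥ : (0,∞) → (0,∞) be strictly increasing with Ĥ(y) → 0 as y → 0⁺ and y·Ĥ(y)² → ∞ as y → ∞, and let ρ > 0. Define φ_ρ(y) := Ĥ(y)^{-2}ρ²·(Ĥ(y)^{-2}ρ² − y) on the interval (0, y_ρ), where y_ρ is the unique solution of y_ρ·Ĥ(y_ρ)² = ρ². Then φ_ρ is a strictly decreasing bijection from (0, y_ρ) onto (0, ∞), so that for every Z ≥ 0 there exists a unique y ∈ (0, y_ρ) with φ_ρ(y) = Z. (Assume additionally that Ĥ is differentiable with d(log Ĥ)/dy > 0 and that φ_ρ(y) → ∞ as y → 0⁺.) -/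

import Mathlib

/-- the function `φ_ρ(y) = Ĥ(y)^{-2}ρ²(Ĥ(y)^{-2}ρ² - y)` is a
strictly decreasing bijection from `(0, y_ρ)` onto `(0, ∞)`, where `y_ρ` solves
`y_ρ·Ĥ(y_ρ)² = ρ²`; hence every positive value `Z` is attained at a unique
`y ∈ (0, y_ρ)`. -/
theorem stmt_18 (H H' φ : ℝ → ℝ) (ρ yρ : ℝ)
    (hρ : 0 < ρ)
    (hHpos : ∀ y : ℝ, 0 < y → 0 < H y)
    (hHmono : StrictMonoOn H (Set.Ioi 0))
    (hH0 : Filter.Tendsto H (nhdsWithin 0 (Set.Ioi 0)) (nhds 0))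
    (hHinf : Filter.Tendsto (fun y => y * H y ^ 2) Filter.atTop Filter.atTop)
    (hH' : ∀ y : ℝ, 0 < y → HasDerivAt H (H' y) y)
    (hH'pos : ∀ y : ℝ, 0 < y → 0 < H' y / H y)
    (hyρ : 0 < yρ) (hyρeq : yρ * H yρ ^ 2 = ρ ^ 2)
    (hφ : ∀ y : ℝ, φ y = (H y)⁻¹ ^ 2 * ρ ^ 2 * ((H y)⁻¹ ^ 2 * ρ ^ 2 - y))
    (hφ0 : Filter.Tendsto φ (nhdsWithin 0 (Set.Ioi 0)) Filter.atTop) :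
    StrictAntiOn φ (Set.Ioo 0 yρ) ∧
    Set.BijOn φ (Set.Ioo 0 yρ) (Set.Ioi 0) ∧
    ∀ Z : ℝ, 0 < Z → ∃! y, y ∈ Set.Ioo 0 yρ ∧ φ y = Z := by
  set g : ℝ → ℝ := fun y => (H y)⁻¹ ^ 2 * ρ ^ 2 with hgdef
  have hgval : ∀ y : ℝ, 0 < y → g y = ρ ^ 2 / (H y) ^ 2 := by
    intro y hy
    have h0 := (hHpos y hy).ne'
    show (H y)⁻¹ ^ 2 * ρ ^ 2 = ρ ^ 2 / (H y) ^ 2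
    rw [inv_pow, inv_mul_eq_div]
  have hgpos : ∀ y : ℝ, 0 < y → 0 < g y := by
    intro y hy
    rw [hgval y hy]
    exact div_pos (pow_pos hρ 2) (pow_pos (hHpos y hy) 2)
  -- key: y < g y on (0, yρ)
  have hkey : ∀ y ∈ Set.Ioo (0:ℝ) yρ, y < g y := by
    intro y hy
    have hHy := hHpos y hy.1
    have hHlt : H y < H yρ := hHmono hy.1 hyρ hy.2
    have h2 : H y ^ 2 < H yρ ^ 2 := by nlinarith
    have h1 : y * H y ^ 2 < ρ ^ 2 := by
      rw [← hyρeq]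
      nlinarith [mul_pos hyρ (sub_pos.2 h2), mul_pos (sub_pos.2 hy.2) (pow_pos hHy 2)]
    rw [hgval y hy.1, lt_div_iff₀ (pow_pos hHy 2)]
    exact h1
  have hgmono : ∀ a b : ℝ, 0 < a → a < b → g b < g a := by
    intro a b ha hab
    have hb : 0 < b := ha.trans hab
    have hHa := hHpos a ha
    have hHlt : H a < H b := hHmono (Set.mem_Ioi.2 ha) (Set.mem_Ioi.2 hb) hab
    rw [hgval a ha, hgval b hb]
    exact div_lt_div_of_pos_left (pow_pos hρ 2) (pow_pos hHa 2)
      (by nlinarith)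
  have hφg : ∀ y : ℝ, φ y = g y * (g y - y) := fun y => hφ y
  -- strict antitone
  have hanti : StrictAntiOn φ (Set.Ioo 0 yρ) := by
    intro a ha b hb hab
    have hga := hkey a ha
    have hgb := hkey b hb
    have hgab := hgmono a b ha.1 hab
    rw [hφg a, hφg b]
    nlinarith [ha.1]
  -- positivity on the interval
  have hmaps : Set.MapsTo φ (Set.Ioo 0 yρ) (Set.Ioi 0) := by
    intro y hy
    have := hkey y hy
    have := hgpos y hy.1
    rw [Set.mem_Ioi, hφg y]
    nlinarith
  -- φ yρ = 0
  have hφyρ : φ yρ = 0 := by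
    have h0 := (hHpos yρ hyρ).ne'
    rw [hφ yρ]
    have : (H yρ)⁻¹ ^ 2 * ρ ^ 2 = yρ := by
      rw [← hyρeq]; field_simp
    rw [this]; ring
  -- continuity of φ on (0, ∞)
  have hφcont : ∀ y : ℝ, 0 < y → ContinuousAt φ y := by
    intro y hy
    have hHc : ContinuousAt H y := (hH' y hy).continuousAt
    have h0 := (hHpos y hy).ne'
    have : ContinuousAt (fun y => (H y)⁻¹ ^ 2 * ρ ^ 2 * ((H y)⁻¹ ^ 2 * ρ ^ 2 - y)) y := by
      fun_prop (disch := assumption)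
    exact this.congr (by filter_upwards with z using (hφ z).symm)
  -- surjectivity
  have hsurj : ∀ Z : ℝ, 0 < Z → ∃ y ∈ Set.Ioo 0 yρ, φ y = Z := by
    intro Z hZ
    -- find a point a near 0 with φ a > Z
    have hev : ∀ᶠ y in nhdsWithin 0 (Set.Ioi 0), Z < φ y ∧ y < yρ := by
      filter_upwards [hφ0.eventually_gt_atTop Z,
        eventually_nhdsWithin_of_eventually_nhds
          (Filter.Tendsto.eventually_lt_const hyρ Filter.tendsto_id)] with y h1 h2
      exact ⟨h1, h2⟩
    obtain ⟨a, ⟨haZ, hayρ⟩, haρ⟩ := (hev.and self_mem_nhdsWithin).exists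
    have ha0 : (0:ℝ) < a := haρ
    have hcont : ContinuousOn φ (Set.Icc a yρ) := by
      intro x hx
      exact (hφcont x (lt_of_lt_of_le ha0 hx.1)).continuousWithinAt
    have hZmem : Z ∈ Set.Icc (φ yρ) (φ a) := ⟨by rw [hφyρ]; exact hZ.le, haZ.le⟩
    obtain ⟨y, hy, hyZ⟩ := intermediate_value_Icc' hayρ.le hcont hZmem
    refine ⟨y, ⟨lt_of_lt_of_le ha0 hy.1, lt_of_le_of_ne hy.2 ?_⟩, hyZ⟩
    intro h
    rw [h, hφyρ] at hyZ
    exact hZ.ne hyZ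
  have hbij : Set.BijOn φ (Set.Ioo 0 yρ) (Set.Ioi 0) := by
    refine ⟨hmaps, hanti.injOn, ?_⟩
    intro Z hZ
    obtain ⟨y, hy, hyZ⟩ := hsurj Z hZ
    exact ⟨y, hy, hyZ⟩
  refine ⟨hanti, hbij, ?_⟩
  intro Z hZ
  obtain ⟨y, hy, hyZ⟩ := hsurj Z hZ
  refine ⟨y, ⟨hy, hyZ⟩, ?_⟩
  rintro y' ⟨hy', hy'Z⟩
  exact hanti.injOn hy' hy (by rw [hyZ, hy'Z])
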